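/- Define f : (0,π) × (ℝ/πℤ) × ℝ² → (0,π) × (ℝ/πℤ) × ℝ² by f(φ,θ,s,t) = (cot⁻¹(t), θ, s, cot(φ)). Then f is a diffeomorphism and f*(ω₁) = ω₂, where ω₁ = (1/sin²φ) dφ ∧ dθ + ds ∧ dt and ω₂ = (1/sin²φ) dφ ∧ ds + dθ ∧ dt. In particular ((0,π)×(ℝ/πℤ)×ℝ², ω₁) and ((0,π)×(ℝ/πℤ)×ℝ², ω₂) are symplectomorphic. -/

import Mathlib

/-- The map `f(φ,θ,s,t) = (cot⁻¹ t, θ, s, cot φ)`, with `cot⁻¹ t = π/2 − arctan t`. -/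
noncomputable def cotFlip (x : ℝ × ℝ × ℝ × ℝ) : ℝ × ℝ × ℝ × ℝ :=
  (Real.pi / 2 - Real.arctan x.2.2.2, x.2.1, x.2.2.1, Real.cot x.1)

/-- The 2-form `ω₁ = (1/sin²φ) dφ ∧ dθ + ds ∧ dt`. -/
noncomputable def omega1 (x u v : ℝ × ℝ × ℝ × ℝ) : ℝ :=
  1 / Real.sin x.1 ^ 2 * (u.1 * v.2.1 - u.2.1 * v.1)
    + (u.2.2.1 * v.2.2.2 - u.2.2.2 * v.2.2.1)

/-- The 2-form `ω₂ = (1/sin²φ) dφ ∧ ds + dθ ∧ dt`. -/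
noncomputable def omega2 (x u v : ℝ × ℝ × ℝ × ℝ) : ℝ :=
  1 / Real.sin x.1 ^ 2 * (u.1 * v.2.2.1 - u.2.2.1 * v.1)
    + (u.2.1 * v.2.2.2 - u.2.2.2 * v.2.1)

lemma cot_eq_tan_pi_div_two_sub (x : ℝ) :
    Real.cot x = Real.tan (Real.pi / 2 - x) := by
  rw [Real.cot_eq_cos_div_sin, Real.tan_eq_sin_div_cos, Real.sin_pi_div_two_sub,
    Real.cos_pi_div_two_sub]

lemma hasDerivAt_cot {x : ℝ} (h : Real.sin x ≠ 0) :
    HasDerivAt Real.cot (-(1 / Real.sin x ^ 2)) x := by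
  have := (Real.hasDerivAt_cos x).div (Real.hasDerivAt_sin x) h
  have heq : Real.cot = fun y => Real.cos y / Real.sin y := by
    funext y; exact Real.cot_eq_cos_div_sin y
  rw [heq]
  refine this.congr_deriv ?_
  have h2 := Real.sin_sq_add_cos_sq x
  rw [← neg_div]; congr 1
  nlinarith [h2]

/-- The map `f(φ,θ,s,t) = (cot⁻¹ t, θ, s, cot φ)` preserves `{φ ∈ (0,π)}`, is a
diffeomorphism thereof (it is a smooth involution), and pulls back
`ω₁ = (1/sin²φ)dφ∧dθ + ds∧dt` to `ω₂ = (1/sin²φ)dφ∧ds + dθ∧dt`. -/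
theorem cotFlip_symplectomorphism :
    ∀ x : ℝ × ℝ × ℝ × ℝ, x.1 ∈ Set.Ioo 0 Real.pi →
      (cotFlip x).1 ∈ Set.Ioo 0 Real.pi ∧
      cotFlip (cotFlip x) = x ∧
      ∃ L : ℝ × ℝ × ℝ × ℝ →L[ℝ] ℝ × ℝ × ℝ × ℝ,
        HasFDerivAt cotFlip L x ∧
        ∀ u v : ℝ × ℝ × ℝ × ℝ, omega1 (cotFlip x) (L u) (L v) = omega2 x u v := by
  intro x hx
  obtain ⟨φ, θ, s, t⟩ := x
  obtain ⟨h0, hπ⟩ := hx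
  simp only at h0 hπ
  have hsin : Real.sin φ ≠ 0 := ne_of_gt (Real.sin_pos_of_pos_of_lt_pi h0 hπ)
  have harct := Real.arctan_mem_Ioo t
  constructor
  · constructor
    · simp only [cotFlip]
      linarith [harct.2]
    · simp only [cotFlip]
      linarith [harct.1, Real.pi_pos]
  constructor
  · -- involution
    simp only [cotFlip, Prod.mk.injEq]
    refine ⟨?_, trivial, trivial, ?_⟩
    · rw [cot_eq_tan_pi_div_two_sub, Real.arctan_tan (by linarith) (by linarith)]
      ring
    · rw [cot_eq_tan_pi_div_two_sub]
      have : Real.pi / 2 - (Real.pi / 2 - Real.arctan t) = Real.arctan t := by ring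
      rw [this, Real.tan_arctan]
  · -- derivative
    set a : ℝ := -(1 / (1 + t ^ 2)) with ha
    set b : ℝ := -(1 / Real.sin φ ^ 2) with hb
    let p1 : ℝ × ℝ × ℝ × ℝ →L[ℝ] ℝ := ContinuousLinearMap.fst ℝ ℝ (ℝ × ℝ × ℝ)
    let p2 : ℝ × ℝ × ℝ × ℝ →L[ℝ] ℝ :=
      (ContinuousLinearMap.fst ℝ ℝ (ℝ × ℝ)).comp (ContinuousLinearMap.snd ℝ ℝ (ℝ × ℝ × ℝ))
    let p3 : ℝ × ℝ × ℝ × ℝ →L[ℝ] ℝ :=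
      (ContinuousLinearMap.fst ℝ ℝ ℝ).comp ((ContinuousLinearMap.snd ℝ ℝ (ℝ × ℝ)).comp
        (ContinuousLinearMap.snd ℝ ℝ (ℝ × ℝ × ℝ)))
    let p4 : ℝ × ℝ × ℝ × ℝ →L[ℝ] ℝ :=
      (ContinuousLinearMap.snd ℝ ℝ ℝ).comp ((ContinuousLinearMap.snd ℝ ℝ (ℝ × ℝ)).comp
        (ContinuousLinearMap.snd ℝ ℝ (ℝ × ℝ × ℝ)))
    refine ⟨(a • p4).prod (p2.prod (p3.prod (b • p1))), ?_, ?_⟩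
    · have h4 : HasFDerivAt (fun y : ℝ × ℝ × ℝ × ℝ => y.2.2.2) p4 (φ, θ, s, t) :=
        p4.hasFDerivAt
      have h1 : HasFDerivAt (fun y : ℝ × ℝ × ℝ × ℝ => y.1) p1 (φ, θ, s, t) :=
        p1.hasFDerivAt
      have harc : HasFDerivAt (fun y : ℝ × ℝ × ℝ × ℝ => Real.pi / 2 - Real.arctan y.2.2.2)
          (a • p4) (φ, θ, s, t) := by
        have := (Real.hasDerivAt_arctan t).comp_hasFDerivAt (φ, θ, s, t) h4
        have h' := (hasFDerivAt_const (Real.pi / 2) _).sub this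
        have key : a • p4 = 0 - (1 / (1 + t ^ 2)) • p4 := by
          rw [ha, zero_sub]; exact neg_smul (1 / (1 + t ^ 2)) p4
        rw [key]
        exact h'
      have hcot : HasFDerivAt (fun y : ℝ × ℝ × ℝ × ℝ => Real.cot y.1)
          (b • p1) (φ, θ, s, t) :=
        by have := (hasDerivAt_cot hsin).comp_hasFDerivAt (φ, θ, s, t) h1; exact this
      exact harc.prodMk ((p2.hasFDerivAt).prodMk ((p3.hasFDerivAt).prodMk hcot))
    · intro u v
      have hsin2 : Real.sin ((cotFlip (φ, θ, s, t)).1) ^ 2 = 1 / (1 + t ^ 2) := by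
        simp only [cotFlip, Real.sin_pi_div_two_sub, Real.cos_arctan]
        rw [div_pow, one_pow, Real.sq_sqrt (by positivity)]
      have ht : (1 : ℝ) + t ^ 2 ≠ 0 := by positivity
      simp only [omega1, omega2, hsin2, ContinuousLinearMap.prod_apply,
        ContinuousLinearMap.smul_apply, ContinuousLinearMap.comp_apply,
        ContinuousLinearMap.coe_fst', ContinuousLinearMap.coe_snd', p1, p2, p3, p4,
        smul_eq_mul, ha, hb]
      field_simp
      ring
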